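/- The 4×4 matrix A_H^{Q2} (as defined in context) has four real eigenvalues: u ± 2α/√5 and u ± √(gh + 4α²). -/
import Mathlib

set_option maxHeartbeats 1600000 in
private lemma det_fin_four' (M : Matrix (Fin 4) (Fin 4) ℝ) :
    M.det =
      M 0 0 * (M 1 1 * (M 2 2 * M 3 3 - M 2 3 * M 3 2) -
        M 1 2 * (M 2 1 * M 3 3 - M 2 3 * M 3 1) +
        M 1 3 * (M 2 1 * M 3 2 - M 2 2 * M 3 1)) -
      M 0 1 * (M 1 0 * (M 2 2 * M 3 3 - M 2 3 * M 3 2) -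
        M 1 2 * (M 2 0 * M 3 3 - M 2 3 * M 3 0) +
        M 1 3 * (M 2 0 * M 3 2 - M 2 2 * M 3 0)) +
      M 0 2 * (M 1 0 * (M 2 1 * M 3 3 - M 2 3 * M 3 1) -
        M 1 1 * (M 2 0 * M 3 3 - M 2 3 * M 3 0) +
        M 1 3 * (M 2 0 * M 3 1 - M 2 1 * M 3 0)) -
      M 0 3 * (M 1 0 * (M 2 1 * M 3 2 - M 2 2 * M 3 1) -
        M 1 1 * (M 2 0 * M 3 2 - M 2 2 * M 3 0) +
        M 1 2 * (M 2 0 * M 3 1 - M 2 1 * M 3 0)) := by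
  simp only [Matrix.det_succ_row_zero, Fin.sum_univ_succ, Matrix.det_fin_zero,
    Finset.univ_unique, Finset.sum_singleton, Matrix.submatrix_apply, smul_eq_mul]
  norm_num [Fin.succAbove, Fin.lt_def]
  simp only [show (Fin.succ 2 : Fin 4) = 3 from rfl, show ((2 : Fin 3).castSucc : Fin 4) = 2 from rfl]
  ring

set_option maxHeartbeats 1600000 in
theorem HSSWME_Q2_real_eigenvalues (g h u α : ℝ) (hgh : g * h > 0) :
    let A : Matrix (Fin 4) (Fin 4) ℝ :=
      !![0, 1, 0, 0;
         -4 * α^2/3 + g * h - u^2, 2 * u, 2 * α, 2 * α;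
         -16 * α^2/9 - 4 * α * u / 3, 4 * α / 3, 29 * α / 30 + u, 11 * α / 30;
         16 * α^2/9 - 4 * α * u / 3, 4 * α / 3, -11 * α / 30, u - 29 * α / 30]
    ∀ lam ∈ ({u + 2 * α / Real.sqrt 5, u - 2 * α / Real.sqrt 5,
        u + Real.sqrt (g * h + 4 * α^2), u - Real.sqrt (g * h + 4 * α^2)} : Set ℝ),
      (A - lam • (1 : Matrix (Fin 4) (Fin 4) ℝ)).det = 0 := by
  intro A lam hlam
  have h5 : (Real.sqrt 5) ^ 2 = 5 := Real.sq_sqrt (by norm_num)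
  have h5' : Real.sqrt 5 ≠ 0 := by positivity
  have hg : g * h + 4 * α ^ 2 ≥ 0 := by positivity
  have hs : (Real.sqrt (g * h + 4 * α ^ 2)) ^ 2 = g * h + 4 * α ^ 2 :=
    Real.sq_sqrt hg
  have key : (A - lam • (1 : Matrix (Fin 4) (Fin 4) ℝ)).det =
      ((u - lam) ^ 2 - 4 * α ^ 2 / 5) * ((u - lam) ^ 2 - (g * h + 4 * α ^ 2)) := by
    have hB : A - lam • (1 : Matrix (Fin 4) (Fin 4) ℝ) = !![-lam, 1, 0, 0;
         -4 * α^2/3 + g * h - u^2, 2 * u - lam, 2 * α, 2 * α;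
         -16 * α^2/9 - 4 * α * u / 3, 4 * α / 3, 29 * α / 30 + u - lam, 11 * α / 30;
         16 * α^2/9 - 4 * α * u / 3, 4 * α / 3, -11 * α / 30, u - 29 * α / 30 - lam] := by
      ext i j
      fin_cases i <;> fin_cases j
      all_goals norm_num [A, Matrix.one_apply]
      all_goals try ring
      all_goals (intro hc; exact absurd hc (by decide))
    rw [hB, det_fin_four']
    norm_num [Matrix.cons_val_zero, Matrix.cons_val_one, Matrix.head_cons,
      Matrix.cons_val_two, Matrix.tail_cons, Matrix.cons_val_three, Matrix.head_fin_const,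
      Matrix.vecHead, Matrix.vecTail]
    ring
  rw [key]
  rcases hlam with hl | hl | hl | hl <;> subst hl
  · have : (u - (u + 2 * α / Real.sqrt 5)) ^ 2 = 4 * α ^ 2 / 5 := by
      rw [show u - (u + 2 * α / Real.sqrt 5) = -(2 * α / Real.sqrt 5) by ring, neg_sq,
        div_pow, h5]; ring
    rw [this]; ring
  · have : (u - (u - 2 * α / Real.sqrt 5)) ^ 2 = 4 * α ^ 2 / 5 := by
      rw [show u - (u - 2 * α / Real.sqrt 5) = 2 * α / Real.sqrt 5 by ring,
        div_pow, h5]; ring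
    rw [this]; ring
  · have : (u - (u + Real.sqrt (g * h + 4 * α ^ 2))) ^ 2 = g * h + 4 * α ^ 2 := by
      rw [show u - (u + Real.sqrt (g * h + 4 * α ^ 2)) = -(Real.sqrt (g * h + 4 * α ^ 2)) by ring,
        neg_pow, hs]; ring
    rw [this]; ring
  · have : (u - (u - Real.sqrt (g * h + 4 * α ^ 2))) ^ 2 = g * h + 4 * α ^ 2 := by
      rw [show u - (u - Real.sqrt (g * h + 4 * α ^ 2)) = Real.sqrt (g * h + 4 * α ^ 2) by ring, hs]
    rw [this]; ring
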